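/- In a Dedekind-finite exchange ring, every right strongly π-regular element is strongly π-regular. -/
import Mathlib


/-- Dittmer et al.: in a Dedekind-finite exchange ring, every right strongly
π-regular element is strongly π-regular. -/
theorem stmt_14 {R : Type*} [Ring R]
    (hdf : ∀ a b : R, a * b = 1 → b * a = 1)
    (hex : ∀ a : R, ∃ e : R, IsIdempotentElem e ∧ (∃ r : R, e = a * r) ∧
      ∃ s : R, 1 - e = (1 - a) * s)
    (a : R) (ha : ∃ (n : ℕ) (x : R), 0 < n ∧ a ^ n = a ^ (n + 1) * x) :
    ∃ (k : ℕ) (x y : R), 0 < k ∧ a ^ k = a ^ (k + 1) * x ∧ a ^ k = y * a ^ (k + 1) := by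
  obtain ⟨n, x, hn, hx⟩ := ha
  -- iterate the right equation
  have hpow : ∀ k : ℕ, a ^ n = a ^ (n + k) * x ^ k := by
    intro k
    induction k with
    | zero => simp
    | succ k ih =>
      have h1 : a ^ (n + k) = a ^ (n + k + 1) * x := by
        calc a ^ (n + k) = a ^ k * a ^ n := by rw [← pow_add, Nat.add_comm]
          _ = a ^ k * (a ^ (n + 1) * x) := by rw [hx]
          _ = a ^ k * a ^ (n + 1) * x := by rw [mul_assoc]
          _ = a ^ (n + k + 1) * x := by
              rw [← pow_add]
              ring_nf
      calc a ^ n = a ^ (n + k) * x ^ k := ih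
        _ = a ^ (n + k + 1) * x * x ^ k := by rw [h1]
        _ = a ^ (n + k + 1) * (x * x ^ k) := by rw [mul_assoc]
        _ = a ^ (n + (k + 1)) * x ^ (k + 1) := by rw [← pow_succ', Nat.add_assoc]
  set b : R := a ^ n with hbdef
  set c : R := x ^ n with hcdef
  have hb : b = b * b * c := by
    have := hpow n
    rwa [pow_add] at this
  obtain ⟨f, hf, ⟨r, hr⟩, ⟨s, hs⟩⟩ := hex (b * c)
  have hbf : b * f = b := by
    have h0 : b * (1 - f) = 0 := by
      rw [hs, ← mul_assoc, mul_sub, mul_one, ← mul_assoc, ← hb, sub_self, zero_mul]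
    have h1 : b - b * f = 0 := by rw [mul_sub, mul_one] at h0; exact h0
    exact (sub_eq_zero.mp h1).symm
  set d : R := f * (c * r) * f with hddef
  have hbd : b * d = f := by
    calc b * d = (b * f) * (c * r) * f := by rw [hddef, ← mul_assoc, ← mul_assoc]
      _ = b * c * r * f := by rw [hbf, ← mul_assoc]
      _ = f * f := by rw [← hr]
      _ = f := hf
  have hfd : f * d = d := by
    rw [hddef, ← mul_assoc, ← mul_assoc, hf]
  have hdf2 : d * f = d := by
    rw [hddef, mul_assoc, mul_assoc, hf, ← mul_assoc]
  have huw : (b + (1 - f)) * (d + (1 - f)) = 1 := by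
    have expand : (b + (1 - f)) * (d + (1 - f))
        = b * d + (b - b * f) + ((d - f * d) + (1 - f) * (1 - f)) := by
      noncomm_ring
    rw [expand, hbd, hbf, hfd, hf.one_sub.eq, sub_self, sub_self]
    noncomm_ring
  have hwu : (d + (1 - f)) * (b + (1 - f)) = 1 := hdf _ _ huw
  have hkey : d * b + (b - f * b) = f := by
    have expand : (d + (1 - f)) * (b + (1 - f))
        = d * b + (d - d * f) + ((b - f * b) + (1 - f) * (1 - f)) := by
      noncomm_ring
    rw [expand, hdf2, hf.one_sub.eq, sub_self] at hwu
    have h3 : (d * b + (b - f * b)) + (1 - f) = 1 := by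
      calc (d * b + (b - f * b)) + (1 - f)
          = d * b + 0 + (b - f * b + (1 - f)) := by abel
        _ = 1 := hwu
    have h4 : d * b + (b - f * b) = 1 - (1 - f) := eq_sub_of_add_eq h3
    simpa using h4
  have hfb : f * b = b := by
    have := congrArg (b * ·) hkey
    simp only [mul_add, mul_sub, ← mul_assoc, hbd, hbf] at this
    -- this : f * b + (b * b - b * b) = b
    rw [sub_self, add_zero] at this
    exact this
  have hdb : d * b = f := by
    rw [hfb, sub_self, add_zero] at hkey
    exact hkey
  have hbb : b = d * (b * b) := by
    calc b = f * b := hfb.symm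
      _ = (d * b) * b := by rw [hdb]
      _ = d * (b * b) := by rw [mul_assoc]
  obtain ⟨m, rfl⟩ : ∃ m, n = m + 1 := ⟨n - 1, by omega⟩
  refine ⟨m + 1, a ^ m * c, d * a ^ m, hn, ?_, ?_⟩
  · have h1 : a ^ (m + 1) = a ^ (m + 1 + (m + 1)) * c := hpow (m + 1)
    rw [h1, ← mul_assoc, ← pow_add]
    congr 2
    omega
  · rw [mul_assoc, ← pow_add]
    have h2 : a ^ (m + (m + 1 + 1)) = b * b := by
      rw [hbdef, ← pow_add]
      congr 1
      omega
    rw [h2]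
    exact hbb
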